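/- Let M and N be submonoids of a subgroup G of Z^d such that the real cone R₊M ∩ R₊N spans the real vector space R·G (the real span of G). Then the subgroup generated by M ∩ N has full rank in G, i.e., its real span equals R·G. -/

import Mathlib

set_option maxHeartbeats 1000000

/-- The cone of finite nonnegative real combinations of elements of Y. -/
def NonnegCone {d : ℕ} (Y : Set (Fin d → ℝ)) : Set (Fin d → ℝ) :=
  {x | ∃ (n : ℕ) (c : Fin n → ℝ) (y : Fin n → (Fin d → ℝ)),
        (∀ i, 0 ≤ c i) ∧ (∀ i, y i ∈ Y) ∧ x = ∑ i, c i • y i}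

/-- Coordinatewise embedding of ℤ^d into ℝ^d. -/
def intToReal {d : ℕ} (v : Fin d → ℤ) : Fin d → ℝ := fun i => (v i : ℝ)

noncomputable section AuxFullRank

open Module

/-- cast a rational vector to a real vector -/
def qrAux {β : Type*} (q : β → ℚ) : β → ℝ := fun b => (q b : ℝ)

lemma qrAux_add {β : Type*} (q q' : β → ℚ) : qrAux (q + q') = qrAux q + qrAux q' := by
  ext b; simp [qrAux]

lemma qrAux_smul {β : Type*} (a : ℚ) (q : β → ℚ) : qrAux (a • q) = (a : ℝ) • qrAux q := by
  ext b; simp [qrAux]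

/-- ℚ-linearly independent rational vectors are ℝ-linearly independent after casting. -/
lemma linearIndependent_qrAux {β ι : Type*} [Fintype β] [Fintype ι] [DecidableEq β]
    [DecidableEq ι] {v : ι → β → ℚ} (h : LinearIndependent ℚ v) :
    LinearIndependent ℝ (fun i => qrAux (v i)) := by
  classical
  set A : Matrix β ι ℚ := Matrix.of fun b i => v i b with hA
  have hker : LinearMap.ker (Matrix.toLin' A) = ⊥ := by
    rw [LinearMap.ker_eq_bot']
    intro g hg
    have h' := Fintype.linearIndependent_iff.1 h g ?_
    · funext i; exact h' i
    · funext b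
      have := congrFun hg b
      simpa [Matrix.toLin'_apply, Matrix.mulVec, dotProduct, hA, mul_comm] using this
  obtain ⟨g, hg⟩ := (Matrix.toLin' A).exists_leftInverse_of_injective hker
  set G : Matrix ι β ℚ := LinearMap.toMatrix' g with hG
  have hGA : G * A = 1 := by
    have := congrArg LinearMap.toMatrix' hg
    rwa [LinearMap.toMatrix'_comp, LinearMap.toMatrix'_toLin', LinearMap.toMatrix'_id] at this
  have hGA' : G.map (Rat.cast : ℚ → ℝ) * A.map (Rat.cast : ℚ → ℝ) = 1 := by
    have h1 : (G * A).map ((Rat.castHom ℝ : ℚ →+* ℝ) : ℚ → ℝ) = G.map Rat.cast * A.map Rat.cast :=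
      Matrix.map_mul
    rw [hGA] at h1
    exact h1.symm.trans (Matrix.map_one _ (by simp) (by simp))
  rw [Fintype.linearIndependent_iff]
  intro gR hgR i
  have hAv : (A.map (Rat.cast : ℚ → ℝ)).mulVec gR = 0 := by
    funext b
    have := congrFun hgR b
    simpa [Matrix.mulVec, dotProduct, hA, qrAux, mul_comm] using this
  have : gR = (G.map (Rat.cast : ℚ → ℝ)).mulVec ((A.map (Rat.cast : ℚ → ℝ)).mulVec gR) := by
    rw [Matrix.mulVec_mulVec, hGA', Matrix.one_mulVec]
  rw [hAv] at this
  simp [Matrix.mulVec_zero] at this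
  exact congrFun this i

/-- mulVec commutes with casting -/
lemma mulVec_qrAux {α β : Type*} [Fintype β] (A : Matrix α β ℚ) (q : β → ℚ) :
    (A.map (Rat.cast : ℚ → ℝ)).mulVec (qrAux q) = qrAux (A.mulVec q) := by
  funext a
  have := (Rat.castHom ℝ).map_mulVec A q a
  exact this.symm

/-- The real kernel of a rational matrix is spanned by the casts of the rational kernel. -/
lemma ker_qrAux_span {α β : Type*} [Fintype α] [Fintype β] [DecidableEq β] (A : Matrix α β ℚ) :
    LinearMap.ker (A.map (Rat.cast : ℚ → ℝ)).mulVecLin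
      = Submodule.span ℝ (qrAux '' (LinearMap.ker A.mulVecLin : Set (β → ℚ))) := by
  classical
  set K := LinearMap.ker A.mulVecLin with hK
  set W := Submodule.span ℝ (qrAux '' (K : Set (β → ℚ))) with hW
  have hWle : W ≤ LinearMap.ker (A.map (Rat.cast : ℚ → ℝ)).mulVecLin := by
    rw [Submodule.span_le]
    rintro _ ⟨q, hq, rfl⟩
    simp only [SetLike.mem_coe, LinearMap.mem_ker, Matrix.mulVecLin_apply]
    rw [mulVec_qrAux]
    have : A.mulVec q = 0 := hq
    rw [this]
    funext b; simp [qrAux]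
  refine (Submodule.eq_of_le_of_finrank_le hWle ?_).symm
  set r := finrank ℚ K with hr
  have hbK : ∃ b : Fin r → (β → ℚ), LinearIndependent ℚ b ∧ ∀ i, b i ∈ K := by
    obtain b := Module.finBasis ℚ K
    exact ⟨fun i => (b i : β → ℚ), b.linearIndependent.map' K.subtype K.ker_subtype,
      fun i => (b i).2⟩
  obtain ⟨bK, hbKind, hbKmem⟩ := hbK
  have hWr : r ≤ finrank ℝ W := by
    have hind : LinearIndependent ℝ (fun i => qrAux (bK i)) := linearIndependent_qrAux hbKind
    have hmem : ∀ i, qrAux (bK i) ∈ W := fun i =>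
      Submodule.subset_span ⟨bK i, hbKmem i, rfl⟩
    have hind' : LinearIndependent ℝ (fun i : Fin r => (⟨qrAux (bK i), hmem i⟩ : W)) := by
      apply LinearIndependent.of_comp W.subtype
      exact hind
    simpa using hind'.fintype_card_le_finrank
  set s := finrank ℚ (LinearMap.range A.mulVecLin) with hs
  set RR := LinearMap.range (A.map (Rat.cast : ℚ → ℝ)).mulVecLin with hRR
  have hrange : s ≤ finrank ℝ RR := by
    obtain b := Module.finBasis ℚ (LinearMap.range A.mulVecLin)
    have hbind : LinearIndependent ℚ (fun i => (b i : α → ℚ)) :=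
      b.linearIndependent.map' (LinearMap.range A.mulVecLin).subtype (Submodule.ker_subtype _)
    have hind : LinearIndependent ℝ (fun i => qrAux ((b i : α → ℚ))) := linearIndependent_qrAux hbind
    have hmem : ∀ i, qrAux ((b i : α → ℚ)) ∈ RR := by
      intro i
      obtain ⟨p, hp⟩ := (b i).2
      exact ⟨qrAux p, by rw [Matrix.mulVecLin_apply, mulVec_qrAux]; rw [Matrix.mulVecLin_apply] at hp; rw [hp]⟩
    have hind' : LinearIndependent ℝ
        (fun i => (⟨qrAux ((b i : α → ℚ)), hmem i⟩ : RR)) := by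
      apply LinearIndependent.of_comp RR.subtype
      exact hind
    simpa using hind'.fintype_card_le_finrank
  have hQ := LinearMap.finrank_range_add_finrank_ker A.mulVecLin
  have hR := LinearMap.finrank_range_add_finrank_ker (A.map (Rat.cast : ℚ → ℝ)).mulVecLin
  rw [Module.finrank_fintype_fun_eq_card] at hQ hR
  have h1 : finrank ℚ (LinearMap.ker A.mulVecLin) = r := rfl
  have h2 : finrank ℚ (LinearMap.range A.mulVecLin) = s := rfl
  have h3 : finrank ℝ (LinearMap.range (A.map (Rat.cast : ℚ → ℝ)).mulVecLin) = finrank ℝ RR := rfl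
  omega

/-- Clearing denominators: a common nonnegative rational combination of elements of M and of N
lies in the real span of `M ∩ N`. -/
lemma clear_denoms {d : ℕ} (M N : AddSubmonoid (Fin d → ℤ)) {k l : ℕ}
    (m : Fin k → Fin d → ℤ) (nn : Fin l → Fin d → ℤ)
    (hm : ∀ i, m i ∈ M) (hn : ∀ j, nn j ∈ N)
    (q : Fin k ⊕ Fin l → ℚ) (hq0 : ∀ t, 0 ≤ q t)
    (heq : ∀ a, ∑ i, q (.inl i) * ((m i a : ℤ) : ℚ) = ∑ j, q (.inr j) * ((nn j a : ℤ) : ℚ)) :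
    (fun a => ∑ i, (q (.inl i) : ℝ) * ((m i a : ℤ) : ℝ))
      ∈ Submodule.span ℝ (intToReal '' ((M : Set (Fin d → ℤ)) ∩ N)) := by
  classical
  set D : ℕ := ∏ t : Fin k ⊕ Fin l, (q t).den with hD
  have hDpos : 0 < D := Finset.prod_pos (fun t _ => (q t).pos)
  have hdvd : ∀ t, (q t).den ∣ D := fun t => Finset.dvd_prod_of_mem _ (Finset.mem_univ t)
  have hex : ∀ t, ∃ n : ℕ, ((n : ℕ) : ℚ) = q t * D := by
    intro t
    refine ⟨(q t).num.toNat * (D / (q t).den), ?_⟩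
    have hden : ((q t).den : ℚ) ≠ 0 := by exact_mod_cast (q t).den_nz
    have h2 : (((q t).num.toNat : ℕ) : ℚ) = ((q t).num : ℚ) := by
      exact_mod_cast Int.toNat_of_nonneg (Rat.num_nonneg.2 (hq0 t))
    have h3 : ((D / (q t).den : ℕ) : ℚ) = (D : ℚ) / (q t).den := Nat.cast_div (hdvd t) hden
    push_cast
    rw [h2, h3]
    calc ((q t).num : ℚ) * ((D : ℚ) / ((q t).den : ℚ))
        = (((q t).num : ℚ) / ((q t).den : ℚ)) * (D : ℚ) := by ring
      _ = q t * D := by rw [Rat.num_div_den]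
  choose a key using hex
  have hsmulcast : ∀ (n : ℕ) (v : Fin d → ℤ) (b : Fin d),
      (((n • v) b : ℤ) : ℚ) = ((n : ℕ) : ℚ) * ((v b : ℤ) : ℚ) := by
    intro n v b
    have h : (n • v) b = (n : ℤ) * v b := by simp
    rw [h]
    push_cast
    ring
  set w1 : Fin d → ℤ := ∑ i, a (.inl i) • m i with hw1def
  set w2 : Fin d → ℤ := ∑ j, a (.inr j) • nn j with hw2def
  have hw1 : w1 ∈ M := AddSubmonoid.sum_mem M (fun i _ => M.nsmul_mem (hm i) _)
  have hw2 : w2 ∈ N := AddSubmonoid.sum_mem N (fun j _ => N.nsmul_mem (hn j) _)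
  have e1 : ∀ b, ((w1 b : ℤ) : ℚ) = ∑ i, ((a (.inl i) : ℚ)) * ((m i b : ℤ) : ℚ) := by
    intro b
    rw [hw1def, Finset.sum_apply]
    rw [Int.cast_sum]
    exact Finset.sum_congr rfl (fun i _ => hsmulcast _ _ _)
  have e2 : ∀ b, ((w2 b : ℤ) : ℚ) = ∑ j, ((a (.inr j) : ℚ)) * ((nn j b : ℤ) : ℚ) := by
    intro b
    rw [hw2def, Finset.sum_apply]
    rw [Int.cast_sum]
    exact Finset.sum_congr rfl (fun j _ => hsmulcast _ _ _)
  have hww : w1 = w2 := by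
    funext b
    have hQ : ((w1 b : ℤ) : ℚ) = ((w2 b : ℤ) : ℚ) := by
      rw [e1 b, e2 b]
      have hterm : ∀ t (v : ℚ), (a t : ℚ) * v = (D : ℚ) * (q t * v) := by
        intro t v; rw [key t]; ring
      calc ∑ i, ((a (.inl i) : ℚ)) * ((m i b : ℤ) : ℚ)
          = (D : ℚ) * ∑ i, q (.inl i) * ((m i b : ℤ) : ℚ) := by
            rw [Finset.mul_sum]; exact Finset.sum_congr rfl (fun i _ => hterm _ _)
        _ = (D : ℚ) * ∑ j, q (.inr j) * ((nn j b : ℤ) : ℚ) := by rw [heq b]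
        _ = ∑ j, ((a (.inr j) : ℚ)) * ((nn j b : ℤ) : ℚ) := by
            rw [Finset.mul_sum]; exact (Finset.sum_congr rfl (fun j _ => (hterm _ _).symm))
    exact_mod_cast hQ
  have hDne : (D : ℝ) ≠ 0 := by positivity
  have e2R : ∀ t, ((a t : ℕ) : ℝ) = (q t : ℝ) * (D : ℝ) := by
    intro t
    exact_mod_cast congrArg (fun x : ℚ => (x : ℝ)) (key t)
  have hfun : (fun b => ∑ i, (q (.inl i) : ℝ) * ((m i b : ℤ) : ℝ))
      = (D : ℝ)⁻¹ • intToReal w1 := by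
    funext b
    have e1R : intToReal w1 b = ∑ i, ((a (.inl i) : ℝ)) * ((m i b : ℤ) : ℝ) := by
      have hcast := congrArg (fun x : ℚ => (x : ℝ)) (e1 b)
      simp only [Rat.cast_sum, Rat.cast_mul, Rat.cast_intCast, Rat.cast_natCast] at hcast
      simpa [intToReal] using hcast
    have hmain : (D : ℝ) * (∑ i, (q (Sum.inl i) : ℝ) * ((m i b : ℤ) : ℝ)) = intToReal w1 b := by
      rw [e1R, Finset.mul_sum]
      exact Finset.sum_congr rfl (fun i _ => by rw [e2R (Sum.inl i)]; ring)
    rw [Pi.smul_apply, smul_eq_mul, ← hmain]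
    field_simp
  rw [hfun]
  exact Submodule.smul_mem _ _ (Submodule.subset_span ⟨w1, ⟨hw1, hww ▸ hw2⟩, rfl⟩)

end AuxFullRank

/-- If the intersection of the real cones generated by submonoids M, N ⊆ G
spans the real span of G, then the subgroup generated by M ∩ N has full rank in
G: its real span equals the real span of G. -/
theorem full_rank_of_cones_span {d : ℕ} (G : AddSubgroup (Fin d → ℤ))
    (M N : AddSubmonoid (Fin d → ℤ))
    (hM : (M : Set (Fin d → ℤ)) ⊆ G) (hN : (N : Set (Fin d → ℤ)) ⊆ G)
    (hspan : Submodule.span ℝ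
        (NonnegCone (intToReal '' (M : Set (Fin d → ℤ))) ∩
         NonnegCone (intToReal '' (N : Set (Fin d → ℤ)))) =
      Submodule.span ℝ (intToReal '' (G : Set (Fin d → ℤ)))) :
    Submodule.span ℝ
        (intToReal '' ((AddSubgroup.closure ((M : Set (Fin d → ℤ)) ∩ N) : AddSubgroup (Fin d → ℤ)) : Set (Fin d → ℤ))) =
      Submodule.span ℝ (intToReal '' (G : Set (Fin d → ℤ))) := by
  classical
  apply le_antisymm
  · apply Submodule.span_mono
    apply Set.image_mono
    exact (AddSubgroup.closure_le G).2 (fun v hv => hM hv.1)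
  · rw [← hspan, Submodule.span_le]
    rintro x ⟨hxM, hxN⟩
    -- it suffices to show x lies in the span of intToReal '' (M ∩ N)
    have hsuf : x ∈ Submodule.span ℝ (intToReal '' ((M : Set (Fin d → ℤ)) ∩ N)) → x ∈
        Submodule.span ℝ
          (intToReal '' ((AddSubgroup.closure ((M : Set (Fin d → ℤ)) ∩ N) :
            AddSubgroup (Fin d → ℤ)) : Set (Fin d → ℤ))) := by
      intro h
      exact Submodule.span_mono (Set.image_mono AddSubgroup.subset_closure) h
    refine hsuf ?_
    obtain ⟨k, c, u, hc, hu, hxc⟩ := hxM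
    obtain ⟨l, e, w, he, hw, hxe⟩ := hxN
    choose m hm hmu using hu
    choose nn hn hnw using hw
    set z : (Fin k ⊕ Fin l) → ℝ := Sum.elim c e with hzdef
    have hz0 : ∀ t, 0 ≤ z t := by rintro (i | j) <;> simp [hzdef] <;> [exact hc i; exact he j]
    -- the coordinates of x
    have hxa : ∀ b, x b = ∑ i, c i * ((m i b : ℤ) : ℝ) := by
      intro b
      rw [hxc, Finset.sum_apply]
      exact Finset.sum_congr rfl (fun i _ => by rw [← hmu i]; simp [intToReal])
    have hya : ∀ b, x b = ∑ j, e j * ((nn j b : ℤ) : ℝ) := by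
      intro b
      rw [hxe, Finset.sum_apply]
      exact Finset.sum_congr rfl (fun j _ => by rw [← hnw j]; simp [intToReal])
    -- the constraint matrix
    set A : Matrix (Fin d ⊕ (Fin k ⊕ Fin l)) (Fin k ⊕ Fin l) ℚ := Matrix.of (fun r t =>
      Sum.elim
        (fun b => Sum.elim (fun i => ((m i b : ℤ) : ℚ)) (fun j => -((nn j b : ℤ) : ℚ)) t)
        (fun t' => if z t' = 0 ∧ t = t' then 1 else 0) r) with hA
    -- z is in the real kernel of A
    have hzker : z ∈ LinearMap.ker (A.map (Rat.cast : ℚ → ℝ)).mulVecLin := by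
      rw [LinearMap.mem_ker]
      funext r
      rw [Matrix.mulVecLin_apply]
      show (A.map (Rat.cast : ℚ → ℝ)).mulVec z r = 0
      cases r with
      | inl b =>
        have : (A.map (Rat.cast : ℚ → ℝ)).mulVec z (Sum.inl b)
            = (∑ i, c i * ((m i b : ℤ) : ℝ)) - (∑ j, e j * ((nn j b : ℤ) : ℝ)) := by
          rw [Matrix.mulVec, dotProduct, Fintype.sum_sum_type]
          have p1 : ∀ i : Fin k, (A.map (Rat.cast : ℚ → ℝ)) (Sum.inl b) (Sum.inl i)
              * z (Sum.inl i) = c i * ((m i b : ℤ) : ℝ) := by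
            intro i; simp [hA, hzdef, mul_comm]
          have p2 : ∀ j : Fin l, (A.map (Rat.cast : ℚ → ℝ)) (Sum.inl b) (Sum.inr j)
              * z (Sum.inr j) = -(e j * ((nn j b : ℤ) : ℝ)) := by
            intro j; simp [hA, hzdef, mul_comm]
          rw [Finset.sum_congr rfl (fun i _ => p1 i), Finset.sum_congr rfl (fun j _ => p2 j)]
          rw [Finset.sum_neg_distrib]
          ring
        rw [this, ← hxa b, ← hya b, sub_self]
      | inr t' =>
        by_cases hzt : z t' = 0
        · have : (A.map (Rat.cast : ℚ → ℝ)).mulVec z (Sum.inr t')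
              = ∑ t, (if t = t' then (1:ℝ) else 0) * z t := by
            rw [Matrix.mulVec, dotProduct]
            exact Finset.sum_congr rfl (fun t _ => by
              simp [hA, hzt, apply_ite (Rat.cast : ℚ → ℝ)])
          rw [this]
          simp [hzt]
        · have : (A.map (Rat.cast : ℚ → ℝ)).mulVec z (Sum.inr t') = 0 := by
            rw [Matrix.mulVec, dotProduct]
            apply Finset.sum_eq_zero
            intro t _
            simp [hA, hzt]
          rw [this]
    -- the rational kernel
    set Kq := LinearMap.ker A.mulVecLin with hKq
    -- support property of rational kernel elements
    have hsupp : ∀ q ∈ Kq, ∀ t, z t = 0 → q t = 0 := by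
      intro q hq t hzt
      have h0 : A.mulVec q = 0 := hq
      have h1 := congrFun h0 (Sum.inr t)
      have h2 : A.mulVec q (Sum.inr t) = q t := by
        rw [Matrix.mulVec, dotProduct]
        have : ∀ s, A (Sum.inr t) s * q s = (if s = t then q s else 0) := by
          intro s
          by_cases hst : s = t
          · simp [hA, hzt, hst]
          · simp [hA, hst]
        rw [Finset.sum_congr rfl (fun s _ => this s)]
        simp
      rw [h2] at h1
      exact h1
    -- z lies in the real span of casts of rational kernel elements
    have hzspan : z ∈ Submodule.span ℝ (qrAux '' (Kq : Set ((Fin k ⊕ Fin l) → ℚ))) := by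
      rw [← ker_qrAux_span]
      exact hzker
    rw [Submodule.mem_span_set'] at hzspan
    obtain ⟨T, lam, g, hsum⟩ := hzspan
    choose qv hqvker hqvcast using fun s => (g s).2
    -- density: find a rational coefficient vector ρ whose combination is positive on supp z
    set Φ : (Fin T → ℝ) → (Fin k ⊕ Fin l) → ℝ := fun ρ t => ∑ s, ρ s * ((qv s t : ℚ) : ℝ)
      with hΦ
    have hΦcont : ∀ t, Continuous (fun ρ => Φ ρ t) := by
      intro t
      apply continuous_finset_sum
      intro s _
      exact (continuous_apply s).mul continuous_const
    set U : Set (Fin T → ℝ) := ⋂ t, {ρ | 0 < z t → 0 < Φ ρ t} with hU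
    have hUopen : IsOpen U := by
      apply isOpen_iInter_of_finite
      intro t
      by_cases hzt : 0 < z t
      · have : {ρ | 0 < z t → 0 < Φ ρ t} = {ρ | 0 < Φ ρ t} := by ext ρ; simp [hzt]
        rw [this]
        exact isOpen_lt continuous_const (hΦcont t)
      · have : {ρ | 0 < z t → 0 < Φ ρ t} = Set.univ := by ext ρ; simp [hzt]
        rw [this]; exact isOpen_univ
    have hΦlam : ∀ t, Φ lam t = z t := by
      intro t
      rw [hΦ, ← hsum, Finset.sum_apply]
      exact Finset.sum_congr rfl (fun s _ => by rw [← hqvcast s]; simp [qrAux])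
    have hlamU : lam ∈ U := by
      rw [hU, Set.mem_iInter]
      intro t
      simp only [Set.mem_setOf_eq]
      intro hzt
      rw [hΦlam t]
      exact hzt
    have hdense : Dense (Set.pi Set.univ (fun _ : Fin T => Set.range (Rat.cast : ℚ → ℝ))) :=
      dense_pi Set.univ (fun i _ => Rat.denseRange_cast)
    obtain ⟨ρR, hρRmem, hρRU⟩ := hdense.exists_mem_open hUopen ⟨lam, hlamU⟩
    choose ρ hρ using fun s => (hρRmem s (Set.mem_univ s))
    set q₀ : (Fin k ⊕ Fin l) → ℚ := ∑ s, ρ s • qv s with hq₀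
    have hq₀ker : q₀ ∈ Kq :=
      Submodule.sum_mem _ (fun s _ => Submodule.smul_mem _ _ (hqvker s))
    have hq₀cast : ∀ t, ((q₀ t : ℚ) : ℝ) = Φ ρR t := by
      intro t
      have h1 : q₀ t = ∑ s, ρ s * qv s t := by rw [hq₀, Finset.sum_apply]; simp
      rw [h1, Rat.cast_sum, hΦ]
      exact Finset.sum_congr rfl (fun s _ => by rw [Rat.cast_mul, hρ s])
    have hq₀pos : ∀ t, 0 < z t → 0 < q₀ t := by
      intro t hzt
      have h2 : 0 < Φ ρR t := (Set.mem_iInter.1 hρRU t) hzt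
      rw [← hq₀cast t] at h2
      exact_mod_cast h2
    have hq₀zero : ∀ t, z t = 0 → q₀ t = 0 := fun t h => hsupp q₀ hq₀ker t h
    have hq₀nonneg : ∀ t, 0 ≤ q₀ t := by
      intro t
      rcases (hz0 t).eq_or_lt with h | h
      · rw [hq₀zero t h.symm]
      · exact (hq₀pos t h).le
    -- find a large natural number K
    obtain ⟨K, hK⟩ : ∃ K : ℕ, ∀ (s : Fin T) (t : Fin k ⊕ Fin l), 0 < z t →
        -(qv s t) < (K : ℚ) * q₀ t := by
      set KS : ℕ := Finset.univ.sup (fun pr : Fin T × (Fin k ⊕ Fin l) =>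
        ⌈(-(qv pr.1 pr.2)) / q₀ pr.2⌉₊) with hKS
      refine ⟨1 + KS, ?_⟩
      intro s t hzt
      have hpos := hq₀pos t hzt
      have h1 : (-(qv s t)) / q₀ t ≤ (⌈(-(qv s t)) / q₀ t⌉₊ : ℚ) := Nat.le_ceil _
      have h2 : (⌈(-(qv s t)) / q₀ t⌉₊ : ℕ) < 1 + KS := by
        have h3 := Finset.le_sup (f := fun pr : Fin T × (Fin k ⊕ Fin l) =>
          ⌈(-(qv pr.1 pr.2)) / q₀ pr.2⌉₊) (Finset.mem_univ (s, t))
        have h4 : KS < 1 + KS := by omega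
        exact lt_of_le_of_lt h3 h4
      have h2' : ((⌈(-(qv s t)) / q₀ t⌉₊ : ℕ) : ℚ) < ((1 + KS : ℕ) : ℚ) := by exact_mod_cast h2
      calc -(qv s t) = ((-(qv s t)) / q₀ t) * q₀ t := by field_simp
        _ ≤ (⌈(-(qv s t)) / q₀ t⌉₊ : ℚ) * q₀ t := mul_le_mul_of_nonneg_right h1 hpos.le
        _ < ((1 + KS : ℕ) : ℚ) * q₀ t := mul_lt_mul_of_pos_right h2' hpos
    -- the good rational kernel points
    set p : Fin T → (Fin k ⊕ Fin l) → ℚ := fun s => (K : ℚ) • q₀ + qv s with hp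
    have hpker : ∀ s, p s ∈ Kq := fun s =>
      Submodule.add_mem _ (Submodule.smul_mem _ _ hq₀ker) (hqvker s)
    have hpnonneg : ∀ s t, 0 ≤ p s t := by
      intro s t
      rcases (hz0 t).eq_or_lt with h | h
      · have h1 := hq₀zero t h.symm
        have h2 := hsupp (qv s) (hqvker s) t h.symm
        simp [hp, h1, h2]
      · have h3 := hK s t h
        simp only [hp, Pi.add_apply, Pi.smul_apply, smul_eq_mul]
        linarith
    set Good : Set ((Fin k ⊕ Fin l) → ℚ) := {qq | qq ∈ Kq ∧ ∀ t, 0 ≤ qq t} with hGood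
    have hzGood : z ∈ Submodule.span ℝ (qrAux '' Good) := by
      have hqr : ∀ s, qrAux (qv s) = qrAux (p s) - (K : ℝ) • qrAux q₀ := by
        intro s
        rw [hp]
        rw [qrAux_add ((K : ℚ) • q₀) (qv s), qrAux_smul]
        push_cast
        abel
      rw [← hsum]
      apply Submodule.sum_mem
      intro s _
      rw [← hqvcast s, hqr s]
      apply Submodule.smul_mem
      apply Submodule.sub_mem
      · exact Submodule.subset_span ⟨p s, ⟨hpker s, hpnonneg s⟩, rfl⟩
      · exact Submodule.smul_mem _ _ (Submodule.subset_span ⟨q₀, ⟨hq₀ker, hq₀nonneg⟩, rfl⟩)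
    -- map down to ℝ^d using the M-part of the coefficients
    set B : ((Fin k ⊕ Fin l) → ℝ) →ₗ[ℝ] (Fin d → ℝ) :=
      ∑ i : Fin k, (LinearMap.proj (Sum.inl i)).smulRight (intToReal (m i)) with hB
    have hBapply : ∀ y : (Fin k ⊕ Fin l) → ℝ, B y = ∑ i, y (Sum.inl i) • intToReal (m i) := by
      intro y
      rw [hB]
      simp [LinearMap.sum_apply, LinearMap.smulRight_apply]
    have hBz : B z = x := by
      rw [hBapply, hxc]
      exact Finset.sum_congr rfl (fun i _ => by rw [hmu i]; simp [hzdef])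
    have hxmem : x ∈ Submodule.span ℝ (B '' (qrAux '' Good)) := by
      rw [← hBz, ← Submodule.map_span]
      exact Submodule.mem_map_of_mem hzGood
    refine Submodule.span_le.2 ?_ hxmem
    rintro _ ⟨_, ⟨qq, hqq, rfl⟩, rfl⟩
    have hrow : ∀ b, ∑ i, qq (Sum.inl i) * ((m i b : ℤ) : ℚ)
        = ∑ j, qq (Sum.inr j) * ((nn j b : ℤ) : ℚ) := by
      intro b
      have h0 : A.mulVec qq = 0 := hqq.1
      have h1 := congrFun h0 (Sum.inl b)
      rw [Matrix.mulVec, dotProduct, Fintype.sum_sum_type] at h1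
      have p1 : ∀ i : Fin k, A (Sum.inl b) (Sum.inl i) * qq (Sum.inl i)
          = qq (Sum.inl i) * ((m i b : ℤ) : ℚ) := by
        intro i; simp [hA, mul_comm]
      have p2 : ∀ j : Fin l, A (Sum.inl b) (Sum.inr j) * qq (Sum.inr j)
          = -(qq (Sum.inr j) * ((nn j b : ℤ) : ℚ)) := by
        intro j; simp [hA, mul_comm]
      rw [Finset.sum_congr rfl (fun i _ => p1 i), Finset.sum_congr rfl (fun j _ => p2 j)] at h1
      rw [Finset.sum_neg_distrib] at h1
      have h1' : ∑ i, qq (Sum.inl i) * ((m i b : ℤ) : ℚ)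
          - ∑ j, qq (Sum.inr j) * ((nn j b : ℤ) : ℚ) = 0 := by
        rw [sub_eq_add_neg]; convert h1 using 2
        rfl
      linarith [h1']
    have hBq : B (qrAux qq) = fun b => ∑ i, ((qq (Sum.inl i) : ℚ) : ℝ) * ((m i b : ℤ) : ℝ) := by
      rw [hBapply]
      funext b
      rw [Finset.sum_apply]
      exact Finset.sum_congr rfl (fun i _ => by simp [qrAux, intToReal])
    rw [SetLike.mem_coe, hBq]
    exact clear_denoms M N m nn hm hn qq hqq.2 hrow
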